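/- arXiv:2309.04813 — 2 statements merged into one kernel-verified Lean document; each statement's English description precedes it below -/
import Mathlib

section
/- For ordered r-uniform hypergraph matchings H and H_r with H_r being r-partite, and for every r-pattern P, the size of the largest P-clique in the blow-up H[H_r] is at most L_P(H)·L_P(H_r), where L_P denotes the size of the largest P-clique. -/
/-- A block `A^k B^k` (if `b = true`) or `B^k A^k` (if `b = false`), where `true` encodes
the letter A and `false` encodes the letter B. -/
def pblock (k : ℕ) (b : Bool) : List Bool :=
  if b then List.replicate k true ++ List.replicate k false
  else List.replicate k false ++ List.replicate k true

/-- An `r`-pattern: a string in `{A,B}^{2r}` starting with A, with `r` A's and `r` B's.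
Here `true` encodes A and `false` encodes B. -/
def IsPattern (r : ℕ) (P : List Bool) : Prop :=
  P.length = 2 * r ∧ P.count true = r ∧ P.head? = some true

/-- The pattern determined by the pair of disjoint finite sets `(e, f)`: list the elements of
`e ∪ f` in increasing order and record membership in `e` (A = `true`) vs `f` (B = `false`). -/
def patternOfPair (e f : Finset ℤ) : List Bool :=
  ((e ∪ f).sort (· ≤ ·)).map (fun x => decide (x ∈ e))

/-- The unordered pair `{e, f}` realizes the pattern `P`. -/
def Realizes (P : List Bool) (e f : Finset ℤ) : Prop :=
  patternOfPair e f = P ∨ patternOfPair f e = P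

/-- A collection `S` is a `P`-clique if every pair of distinct members realizes the pattern `P`. -/
def IsPClique (P : List Bool) (S : Finset (Finset ℤ)) : Prop :=
  ∀ e ∈ S, ∀ f ∈ S, e ≠ f → Realizes P e f

/-- `H` is `r`-partite: for every two edges `e, f` (possibly equal), the `i`-th smallest
vertex of `e` precedes the `(i+1)`-th smallest vertex of `f`. -/
def RPartite (H : Finset (Finset ℤ)) : Prop :=
  ∀ e ∈ H, ∀ f ∈ H, ∀ i : ℕ,
    ∀ hie : i < (e.sort (· ≤ ·)).length, ∀ hif : i + 1 < (f.sort (· ≤ ·)).length,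
      (e.sort (· ≤ ·)).get ⟨i, hie⟩ < (f.sort (· ≤ ·)).get ⟨i + 1, hif⟩

/-- The edge of the blow-up obtained from the edge `e` of `H` and the edge `f` of `Hr`:
its `i`-th smallest element is `N·eᵢ + fᵢ`, where `e₁ < … < eᵣ` and `f₁ < … < fᵣ` are the
elements of `e` and `f`. -/
def combineEdge (N : ℤ) (e f : Finset ℤ) : Finset ℤ :=
  (List.zipWith (fun a b => N * a + b) (e.sort (· ≤ ·)) (f.sort (· ≤ ·))).toFinset

/-- The blow-up `H[Hr]`: each vertex of `H` is replaced by `N` consecutive positions, and a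
copy of `Hr` (whose vertices lie in `{0, …, N-1}`) is placed inside every edge of `H`. -/
def blowup (N : ℤ) (H Hr : Finset (Finset ℤ)) : Finset (Finset ℤ) :=
  (H ×ˢ Hr).image (fun p => combineEdge N p.1 p.2)

lemma my_sort_eq (s : Finset ℤ) (l : List ℤ) (hs : l.Pairwise (· < ·)) (ht : l.toFinset = s) :
    s.sort (· ≤ ·) = l :=
  List.Perm.eq_of_pairwise'
    (Finset.pairwise_sort s _) (hs.imp le_of_lt)
    (List.perm_of_nodup_nodup_toFinset_eq (Finset.sort_nodup s _) hs.nodup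
      (by rw [Finset.sort_toFinset, ht]))

lemma my_sort_image (s : Finset ℤ) (φ : ℤ → ℤ)
    (h : ∀ x ∈ s, ∀ y ∈ s, x < y → φ x < φ y) :
    (s.image φ).sort (· ≤ ·) = (s.sort (· ≤ ·)).map φ := by
  apply my_sort_eq
  · exact List.pairwise_map.2 ((Finset.sortedLT_sort s).pairwise.imp_of_mem
      (fun ha hb hab => h _ ((Finset.mem_sort _).1 ha) _ ((Finset.mem_sort _).1 hb) hab))
  · ext x; simp

lemma my_pattern_image (e f : Finset ℤ) (φ : ℤ → ℤ)
    (h : ∀ x ∈ e ∪ f, ∀ y ∈ e ∪ f, x < y → φ x < φ y) :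
    patternOfPair (e.image φ) (f.image φ) = patternOfPair e f := by
  have hinj : ∀ x ∈ e ∪ f, ∀ y ∈ e ∪ f, φ x = φ y → x = y := by
    intro x hx y hy hxy
    rcases lt_trichotomy x y with h1 | h1 | h1
    · exact absurd hxy (ne_of_lt (h x hx y hy h1))
    · exact h1
    · exact absurd hxy.symm (ne_of_lt (h y hy x hx h1))
  unfold patternOfPair
  rw [← Finset.image_union, my_sort_image _ _ h, List.map_map]
  apply List.map_congr_left
  intro y hy
  have hy' : y ∈ e ∪ f := (Finset.mem_sort _).1 hy
  simp only [Function.comp_apply]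
  apply decide_eq_decide.2
  constructor
  · intro hm
    obtain ⟨a, ha, hae⟩ := Finset.mem_image.1 hm
    rwa [← hinj a (Finset.mem_union_left _ ha) y hy' hae]
  · intro hm; exact Finset.mem_image_of_mem _ hm

lemma my_combine_sort (N : ℤ) (hN0 : 0 ≤ N) (e f : Finset ℤ) :
    (combineEdge N e f).sort (· ≤ ·) =
      List.zipWith (fun a b => N * a + b) (e.sort (· ≤ ·)) (f.sort (· ≤ ·)) := by
  apply my_sort_eq
  · apply List.pairwise_iff_get.2
    intro i j hij
    have hi : (↑i : ℕ) < (e.sort (· ≤ ·)).length ∧ (↑i : ℕ) < (f.sort (· ≤ ·)).length := by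
      exact lt_min_iff.1 (lt_of_lt_of_eq i.isLt List.length_zipWith)
    have hj : (↑j : ℕ) < (e.sort (· ≤ ·)).length ∧ (↑j : ℕ) < (f.sort (· ≤ ·)).length := by
      exact lt_min_iff.1 (lt_of_lt_of_eq j.isLt List.length_zipWith)
    simp only [List.get_eq_getElem, List.getElem_zipWith]
    have he := List.pairwise_iff_get.1 (Finset.sortedLT_sort e).pairwise ⟨i, hi.1⟩ ⟨j, hj.1⟩ hij
    have hf := List.pairwise_iff_get.1 (Finset.sortedLT_sort f).pairwise ⟨i, hi.2⟩ ⟨j, hj.2⟩ hij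
    have h1 : N * (e.sort (· ≤ ·)).get ⟨i, hi.1⟩ ≤ N * (e.sort (· ≤ ·)).get ⟨j, hj.1⟩ :=
      mul_le_mul_of_nonneg_left he.le hN0
    simp only [List.get_eq_getElem] at he hf h1
    linarith
  · rfl

lemma my_key {N a b a' b' : ℤ} (hb0 : 0 ≤ b) (hbN : b < N) (hb0' : 0 ≤ b') (hbN' : b' < N)
    (h : N * a + b = N * a' + b') : a = a' ∧ b = b' := by
  have hN : 0 < N := lt_of_le_of_lt hb0 hbN
  have ha : a = a' := by
    rcases lt_trichotomy a a' with h1 | h1 | h1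
    · have h2 : N * (a + 1) ≤ N * a' := mul_le_mul_of_nonneg_left (by omega) hN.le
      have h3 : N * (a + 1) = N * a + N := by ring
      linarith
    · exact h1
    · have h2 : N * (a' + 1) ≤ N * a := mul_le_mul_of_nonneg_left (by omega) hN.le
      have h3 : N * (a' + 1) = N * a' + N := by ring
      linarith
  exact ⟨ha, by rw [ha] at h; linarith⟩

lemma my_sort_get_mono (s : Finset ℤ) {i j : ℕ} (hij : i ≤ j) (hj : j < (s.sort (· ≤ ·)).length) :
    (s.sort (· ≤ ·)).get ⟨i, lt_of_le_of_lt hij hj⟩ ≤ (s.sort (· ≤ ·)).get ⟨j, hj⟩ := by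
  rcases eq_or_lt_of_le hij with rfl | h
  · exact le_refl _
  · exact (List.pairwise_iff_get.1 (Finset.sortedLT_sort s).pairwise _ _ (by exact h)).le

/-- value used for the "same f, varying e" map -/
def pv1 (N : ℤ) (e f : Finset ℤ) (x : ℤ) : ℤ :=
  N * x + (f.sort (· ≤ ·)).getD ((e.sort (· ≤ ·)).idxOf x) 0

/-- value used for the "same e, varying f" map -/
def pv2 (N : ℤ) (e f : Finset ℤ) (x : ℤ) : ℤ :=
  N * ((e.sort (· ≤ ·)).getD ((f.sort (· ≤ ·)).idxOf x) 0) + x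

lemma my_image_list (g : ℤ → ℤ) (s : Finset ℤ) :
    s.image g = ((s.sort (· ≤ ·)).map g).toFinset := by
  ext x; simp

lemma my_image_pv1 (N : ℤ) (e f : Finset ℤ) (hc : e.card = f.card) :
    e.image (pv1 N e f) = combineEdge N e f := by
  rw [my_image_list]
  unfold combineEdge
  congr 1
  apply List.ext_getElem
  · simp [List.length_zipWith, Finset.length_sort, hc]
  · intro n h1 h2
    rw [List.getElem_map, List.getElem_zipWith]
    unfold pv1
    have hn : n < (e.sort (· ≤ ·)).length := by simpa using h1
    have hnf : n < (f.sort (· ≤ ·)).length := by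
      simp only [Finset.length_sort] at hn ⊢; omega
    have hidx : (e.sort (· ≤ ·)).idxOf ((e.sort (· ≤ ·))[n]) = n := by
      have hlt : (e.sort (· ≤ ·)).idxOf ((e.sort (· ≤ ·))[n]) < (e.sort (· ≤ ·)).length :=
        List.idxOf_lt_length_iff.2 (List.getElem_mem hn)
      have heq : (e.sort (· ≤ ·))[(e.sort (· ≤ ·)).idxOf ((e.sort (· ≤ ·))[n])] =
          (e.sort (· ≤ ·))[n] := List.getElem_idxOf hlt
      exact (List.Nodup.getElem_inj_iff (Finset.sort_nodup e _)).1 heq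
    rw [hidx, List.getD_eq_getElem _ _ hnf]

lemma my_image_pv2 (N : ℤ) (e f : Finset ℤ) (hc : e.card = f.card) :
    f.image (pv2 N e f) = combineEdge N e f := by
  rw [my_image_list]
  unfold combineEdge
  congr 1
  apply List.ext_getElem
  · simp [List.length_zipWith, Finset.length_sort, hc]
  · intro n h1 h2
    rw [List.getElem_map, List.getElem_zipWith]
    unfold pv2
    have hn : n < (f.sort (· ≤ ·)).length := by simpa using h1
    have hne : n < (e.sort (· ≤ ·)).length := by
      simp only [Finset.length_sort] at hn ⊢; omega
    have hidx : (f.sort (· ≤ ·)).idxOf ((f.sort (· ≤ ·))[n]) = n := by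
      have hlt : (f.sort (· ≤ ·)).idxOf ((f.sort (· ≤ ·))[n]) < (f.sort (· ≤ ·)).length :=
        List.idxOf_lt_length_iff.2 (List.getElem_mem hn)
      have heq : (f.sort (· ≤ ·))[(f.sort (· ≤ ·)).idxOf ((f.sort (· ≤ ·))[n])] =
          (f.sort (· ≤ ·))[n] := List.getElem_idxOf hlt
      exact (List.Nodup.getElem_inj_iff (Finset.sort_nodup f _)).1 heq
    rw [hidx, List.getD_eq_getElem _ _ hne]

lemma my_pv1_mem (e f : Finset ℤ) (hc : e.card = f.card) (x : ℤ) (hx : x ∈ e) :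
    (f.sort (· ≤ ·)).getD ((e.sort (· ≤ ·)).idxOf x) 0 ∈ f := by
  have hmem : x ∈ e.sort (· ≤ ·) := (Finset.mem_sort _).2 hx
  have hlt : (e.sort (· ≤ ·)).idxOf x < (f.sort (· ≤ ·)).length := by
    have := List.idxOf_lt_length_iff.2 hmem
    simp only [Finset.length_sort] at this ⊢; omega
  rw [List.getD_eq_getElem _ _ hlt]
  exact (Finset.mem_sort _).1 (List.getElem_mem hlt)

lemma my_pattern_fst (N : ℤ) (hN1 : 1 ≤ N) (e e' f f' : Finset ℤ)
    (hde : Disjoint e e') (hce : e.card = f.card) (hce' : e'.card = f'.card)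
    (hf : ∀ z ∈ f, 0 ≤ z ∧ z < N) (hf' : ∀ z ∈ f', 0 ≤ z ∧ z < N) :
    patternOfPair (combineEdge N e f) (combineEdge N e' f') = patternOfPair e e' := by
  classical
  set φ : ℤ → ℤ := fun x => if x ∈ e then pv1 N e f x else pv1 N e' f' x with hφ
  have h1 : e.image φ = combineEdge N e f := by
    rw [← my_image_pv1 N e f hce]
    apply Finset.image_congr
    intro x hx
    simp only [hφ]
    rw [if_pos (Finset.mem_coe.1 hx)]
  have h2 : e'.image φ = combineEdge N e' f' := by
    rw [← my_image_pv1 N e' f' hce']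
    apply Finset.image_congr
    intro x hx
    have hxe : x ∉ e := fun h => (Finset.disjoint_left.1 hde h) (Finset.mem_coe.1 hx)
    simp only [hφ]
    rw [if_neg hxe]
  have hb : ∀ x ∈ e ∪ e', ∃ b, 0 ≤ b ∧ b < N ∧ φ x = N * x + b := by
    intro x hx
    rcases Finset.mem_union.1 hx with hx | hx
    · have hm := my_pv1_mem e f hce x hx
      exact ⟨_, (hf _ hm).1, (hf _ hm).2, by simp only [hφ]; rw [if_pos hx]; rfl⟩
    · have hxe : x ∉ e := fun h => (Finset.disjoint_left.1 hde h) hx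
      have hm := my_pv1_mem e' f' hce' x hx
      exact ⟨_, (hf' _ hm).1, (hf' _ hm).2, by simp only [hφ]; rw [if_neg hxe]; rfl⟩
  rw [← h1, ← h2]
  apply my_pattern_image
  intro x hx y hy hxy
  obtain ⟨bx, hbx0, hbxN, hbx⟩ := hb x hx
  obtain ⟨c, hc0, hcN, hc⟩ := hb y hy
  rw [hbx, hc]
  have h2 : N * (x + 1) ≤ N * y := mul_le_mul_of_nonneg_left (by omega) (by omega)
  have h3 : N * (x + 1) = N * x + N := by ring
  linarith

lemma my_mono2 (N : ℤ) (hN0 : 0 ≤ N) (Hr : Finset (Finset ℤ)) (hrp : RPartite Hr)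
    (e g g' : Finset ℤ) (hg : g ∈ Hr) (hg' : g' ∈ Hr)
    (heg : e.card = g.card) (heg' : e.card = g'.card)
    (i j : ℕ) (hi : i < (g.sort (· ≤ ·)).length) (hj : j < (g'.sort (· ≤ ·)).length)
    (hxy : (g.sort (· ≤ ·)).get ⟨i, hi⟩ < (g'.sort (· ≤ ·)).get ⟨j, hj⟩) :
    N * (e.sort (· ≤ ·)).getD i 0 + (g.sort (· ≤ ·)).get ⟨i, hi⟩
      < N * (e.sort (· ≤ ·)).getD j 0 + (g'.sort (· ≤ ·)).get ⟨j, hj⟩ := by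
  have hie : i < (e.sort (· ≤ ·)).length := by
    simp only [Finset.length_sort] at hi ⊢; omega
  have hje : j < (e.sort (· ≤ ·)).length := by
    simp only [Finset.length_sort] at hj ⊢; omega
  rw [List.getD_eq_getElem _ _ hie, List.getD_eq_getElem _ _ hje]
  by_cases hij : i ≤ j
  · have hmono : (e.sort (· ≤ ·))[i] ≤ (e.sort (· ≤ ·))[j] := my_sort_get_mono e hij hje
    have : N * (e.sort (· ≤ ·))[i] ≤ N * (e.sort (· ≤ ·))[j] :=
      mul_le_mul_of_nonneg_left hmono hN0
    linarith
  · exfalso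
    push_neg at hij
    have hj1 : j + 1 < (g.sort (· ≤ ·)).length := by omega
    have h1 := hrp g' hg' g hg j hj hj1
    have h2 : (g.sort (· ≤ ·)).get ⟨j + 1, hj1⟩ ≤ (g.sort (· ≤ ·)).get ⟨i, hi⟩ :=
      my_sort_get_mono g (by omega) hi
    linarith

lemma my_pattern_snd (N : ℤ) (hN0 : 0 ≤ N) (Hr : Finset (Finset ℤ)) (hrp : RPartite Hr)
    (e f f' : Finset ℤ) (hce : e.card = f.card) (hce' : e.card = f'.card)
    (hdf : Disjoint f f') (hfHr : f ∈ Hr) (hf'Hr : f' ∈ Hr) :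
    patternOfPair (combineEdge N e f) (combineEdge N e f') = patternOfPair f f' := by
  classical
  set ψ : ℤ → ℤ := fun x => if x ∈ f then pv2 N e f x else pv2 N e f' x with hψ
  have h1 : f.image ψ = combineEdge N e f := by
    rw [← my_image_pv2 N e f hce]
    apply Finset.image_congr
    intro x hx
    simp only [hψ]; rw [if_pos (Finset.mem_coe.1 hx)]
  have h2 : f'.image ψ = combineEdge N e f' := by
    rw [← my_image_pv2 N e f' hce']
    apply Finset.image_congr
    intro x hx
    have hxf : x ∉ f := fun h => (Finset.disjoint_left.1 hdf h) (Finset.mem_coe.1 hx)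
    simp only [hψ]; rw [if_neg hxf]
  rw [← h1, ← h2]
  apply my_pattern_image
  intro x hx y hy hxy
  -- decompose x and y
  have key : ∀ z ∈ f ∪ f', ∃ (g : Finset ℤ) (hg : g ∈ Hr) (i : ℕ)
      (hi : i < (g.sort (· ≤ ·)).length), e.card = g.card ∧
      (g.sort (· ≤ ·)).get ⟨i, hi⟩ = z ∧ ψ z = N * (e.sort (· ≤ ·)).getD i 0 + z := by
    intro z hz
    rcases Finset.mem_union.1 hz with hz | hz
    · have hmem : z ∈ f.sort (· ≤ ·) := (Finset.mem_sort _).2 hz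
      have hlt := List.idxOf_lt_length_iff.2 hmem
      refine ⟨f, hfHr, (f.sort (· ≤ ·)).idxOf z, hlt, hce, ?_, ?_⟩
      · exact List.getElem_idxOf hlt
      · simp only [hψ]; rw [if_pos hz]; rfl
    · have hzf : z ∉ f := fun h => (Finset.disjoint_left.1 hdf h) hz
      have hmem : z ∈ f'.sort (· ≤ ·) := (Finset.mem_sort _).2 hz
      have hlt := List.idxOf_lt_length_iff.2 hmem
      refine ⟨f', hf'Hr, (f'.sort (· ≤ ·)).idxOf z, hlt, hce', ?_, ?_⟩
      · exact List.getElem_idxOf hlt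
      · simp only [hψ]; rw [if_neg hzf]; rfl
  obtain ⟨g, hg, i, hi, hcg, hgx, hpx⟩ := key x hx
  obtain ⟨g', hg', j, hj, hcg', hgy, hpy⟩ := key y hy
  rw [hpx, hpy]
  have := my_mono2 N hN0 Hr hrp e g g' hg hg' hcg hcg' i j hi hj (by rw [hgx, hgy]; exact hxy)
  rw [hgx, hgy] at this
  exact this



lemma my_combine_inj (N : ℤ) (hN1 : 1 ≤ N) (e f e' f' : Finset ℤ)
    (hce : e.card = f.card) (hce' : e'.card = f'.card) (hcc : e.card = e'.card)
    (hf : ∀ z ∈ f, 0 ≤ z ∧ z < N) (hf' : ∀ z ∈ f', 0 ≤ z ∧ z < N)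
    (h : combineEdge N e f = combineEdge N e' f') : e = e' ∧ f = f' := by
  have hs := congrArg (fun s : Finset ℤ => s.sort (· ≤ ·)) h
  rw [my_combine_sort N (by omega) e f, my_combine_sort N (by omega) e' f'] at hs
  have main : ∀ (n : ℕ) (h1 : n < (e.sort (· ≤ ·)).length) (h2 : n < (e'.sort (· ≤ ·)).length)
      (h3 : n < (f.sort (· ≤ ·)).length) (h4 : n < (f'.sort (· ≤ ·)).length),
      (e.sort (· ≤ ·))[n] = (e'.sort (· ≤ ·))[n] ∧ (f.sort (· ≤ ·))[n] = (f'.sort (· ≤ ·))[n] := by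
    intro n h1 h2 h3 h4
    have hz1 : n < (List.zipWith (fun a b => N * a + b) (e.sort (· ≤ ·)) (f.sort (· ≤ ·))).length := by
      rw [List.length_zipWith]; omega
    have hz2 : n < (List.zipWith (fun a b => N * a + b) (e'.sort (· ≤ ·)) (f'.sort (· ≤ ·))).length := by
      rw [List.length_zipWith]; omega
    have h0 := List.getElem_of_eq hs hz1
    rw [List.getElem_zipWith, List.getElem_zipWith] at h0
    have hbf : (f.sort (· ≤ ·))[n] ∈ f := (Finset.mem_sort _).1 (List.getElem_mem h3)
    have hbf' : (f'.sort (· ≤ ·))[n] ∈ f' := (Finset.mem_sort _).1 (List.getElem_mem h4)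
    exact my_key (hf _ hbf).1 (hf _ hbf).2 (hf' _ hbf').1 (hf' _ hbf').2 h0
  have hlenee : (e.sort (· ≤ ·)).length = (e'.sort (· ≤ ·)).length := by
    simp [Finset.length_sort, hcc]
  have hlenff : (f.sort (· ≤ ·)).length = (f'.sort (· ≤ ·)).length := by
    simp only [Finset.length_sort]; omega
  have hes : e.sort (· ≤ ·) = e'.sort (· ≤ ·) := by
    apply List.ext_getElem hlenee
    intro n h1 h2
    exact (main n h1 h2 (by simp only [Finset.length_sort] at h1 ⊢; omega)
      (by simp only [Finset.length_sort] at h2 ⊢; omega)).1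
  have hfs : f.sort (· ≤ ·) = f'.sort (· ≤ ·) := by
    apply List.ext_getElem hlenff
    intro n h3 h4
    exact (main n (by simp only [Finset.length_sort] at h3 ⊢; omega)
      (by simp only [Finset.length_sort] at h4 ⊢; omega) h3 h4).2
  constructor
  · rw [← Finset.sort_toFinset e (· ≤ ·), ← Finset.sort_toFinset e' (· ≤ ·), hes]
  · rw [← Finset.sort_toFinset f (· ≤ ·), ← Finset.sort_toFinset f' (· ≤ ·), hfs]

/-- For ordered `r`-uniform matchings `H` and `Hr` with `Hr` being `r`-partite (and with the
vertices of `Hr` lying in `{0, …, N-1}`), the largest `P`-clique in the blow-up `H[Hr]` has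
size at most `L_P(H) · L_P(Hr)` for every `r`-pattern `P`. -/
theorem blowup_clique_bound (r : ℕ) (hr : 1 ≤ r) (N : ℤ)
    (H Hr : Finset (Finset ℤ))
    (hHcard : ∀ e ∈ H, e.card = r)
    (hHdisj : ∀ e ∈ H, ∀ f ∈ H, e ≠ f → Disjoint e f)
    (hHrcard : ∀ e ∈ Hr, e.card = r)
    (hHrdisj : ∀ e ∈ Hr, ∀ f ∈ Hr, e ≠ f → Disjoint e f)
    (hrp : RPartite Hr)
    (hN : ∀ f ∈ Hr, ∀ z ∈ f, 0 ≤ z ∧ z < N)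
    (P : List Bool) (hP : IsPattern r P) (mH mHr : ℕ)
    (hLH : ∀ S ⊆ H, IsPClique P S → S.card ≤ mH)
    (hLHr : ∀ S ⊆ Hr, IsPClique P S → S.card ≤ mHr) :
    ∀ S ⊆ blowup N H Hr, IsPClique P S → S.card ≤ mH * mHr := by
  classical
  intro S hS hclique
  rcases Finset.eq_empty_or_nonempty S with rfl | ⟨c0, hc0⟩
  · simp
  have hc0' := hS hc0
  rw [blowup, Finset.mem_image] at hc0'
  obtain ⟨p0, hp0, -⟩ := hc0'
  have hHr0 : p0.2 ∈ Hr := (Finset.mem_product.1 hp0).2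
  have hN1 : (1 : ℤ) ≤ N := by
    have hcard := hHrcard _ hHr0
    obtain ⟨z, hz⟩ := Finset.card_pos.1 (by omega : 0 < p0.2.card)
    have := hN _ hHr0 z hz
    omega
  set cmb : Finset ℤ × Finset ℤ → Finset ℤ := fun p => combineEdge N p.1 p.2 with hcmb
  set T : Finset (Finset ℤ × Finset ℤ) := (H ×ˢ Hr).filter (fun p => cmb p ∈ S) with hT
  have hTmem : ∀ p ∈ T, p.1 ∈ H ∧ p.2 ∈ Hr ∧ cmb p ∈ S := by
    intro p hp
    rw [hT, Finset.mem_filter, Finset.mem_product] at hp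
    exact ⟨hp.1.1, hp.1.2, hp.2⟩
  have hinj : ∀ p ∈ T, ∀ q ∈ T, cmb p = cmb q → p = q := by
    intro p hp q hq hpq
    obtain ⟨hp1, hp2, -⟩ := hTmem p hp
    obtain ⟨hq1, hq2, -⟩ := hTmem q hq
    have := my_combine_inj N hN1 p.1 p.2 q.1 q.2
      (by rw [hHcard _ hp1, hHrcard _ hp2])
      (by rw [hHcard _ hq1, hHrcard _ hq2])
      (by rw [hHcard _ hp1, hHcard _ hq1])
      (fun z hz => hN _ hp2 z hz) (fun z hz => hN _ hq2 z hz) hpq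
    exact Prod.ext this.1 this.2
  have hST : S = T.image cmb := by
    ext c
    simp only [Finset.mem_image, hT, Finset.mem_filter]
    constructor
    · intro hc
      have hc2 := hS hc
      rw [blowup, Finset.mem_image] at hc2
      obtain ⟨p, hp, hpc⟩ := hc2
      exact ⟨p, ⟨hp, by rw [hcmb]; simpa [hpc] using hc⟩, hpc⟩
    · rintro ⟨p, ⟨-, hp2⟩, rfl⟩
      exact hp2
  have hcardS : S.card = T.card := by
    rw [hST]
    exact Finset.card_image_of_injOn (fun p hp q hq h =>
      hinj p (Finset.mem_coe.1 hp) q (Finset.mem_coe.1 hq) h)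
  have hreal : ∀ p ∈ T, ∀ q ∈ T, p ≠ q → Realizes P (cmb p) (cmb q) := by
    intro p hp q hq hne
    exact hclique _ (hTmem p hp).2.2 _ (hTmem q hq).2.2 (fun h => hne (hinj p hp q hq h))
  set E : Finset (Finset ℤ) := T.image Prod.fst with hE
  have hEH : E ⊆ H := by
    intro e he
    rw [hE, Finset.mem_image] at he
    obtain ⟨p, hp, rfl⟩ := he
    exact (hTmem p hp).1
  have hEclique : IsPClique P E := by
    intro e1 he1 e2 he2 hne
    rw [hE, Finset.mem_image] at he1 he2
    obtain ⟨p, hp, rfl⟩ := he1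
    obtain ⟨q, hq, rfl⟩ := he2
    have hR : patternOfPair (cmb p) (cmb q) = P ∨ patternOfPair (cmb q) (cmb p) = P :=
      hreal p hp q hq (fun h => hne (by rw [h]))
    have hd : Disjoint p.1 q.1 := hHdisj _ (hTmem p hp).1 _ (hTmem q hq).1 hne
    have h1 : patternOfPair (cmb p) (cmb q) = patternOfPair p.1 q.1 :=
      my_pattern_fst N hN1 p.1 q.1 p.2 q.2 hd
        (by rw [hHcard _ (hTmem p hp).1, hHrcard _ (hTmem p hp).2.1])
        (by rw [hHcard _ (hTmem q hq).1, hHrcard _ (hTmem q hq).2.1])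
        (fun z hz => hN _ (hTmem p hp).2.1 z hz) (fun z hz => hN _ (hTmem q hq).2.1 z hz)
    have h2 : patternOfPair (cmb q) (cmb p) = patternOfPair q.1 p.1 :=
      my_pattern_fst N hN1 q.1 p.1 q.2 p.2 hd.symm
        (by rw [hHcard _ (hTmem q hq).1, hHrcard _ (hTmem q hq).2.1])
        (by rw [hHcard _ (hTmem p hp).1, hHrcard _ (hTmem p hp).2.1])
        (fun z hz => hN _ (hTmem q hq).2.1 z hz) (fun z hz => hN _ (hTmem p hp).2.1 z hz)
    rcases hR with h | h
    · left; rw [← h1]; exact h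
    · right; rw [← h2]; exact h
  have hfib : T.card = ∑ e ∈ E, (T.filter (fun p => p.1 = e)).card :=
    Finset.card_eq_sum_card_fiberwise (fun p hp => Finset.mem_image_of_mem _ hp)
  have hfibbound : ∀ e ∈ E, (T.filter (fun p => p.1 = e)).card ≤ mHr := by
    intro e he
    have hTeT : T.filter (fun p => p.1 = e) ⊆ T := Finset.filter_subset _ _
    have hcard2 : ((T.filter (fun p => p.1 = e)).image Prod.snd).card
        = (T.filter (fun p => p.1 = e)).card := by
      apply Finset.card_image_of_injOn
      intro p hp q hq hpq
      have hp' := Finset.mem_filter.1 (Finset.mem_coe.1 hp)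
      have hq' := Finset.mem_filter.1 (Finset.mem_coe.1 hq)
      exact Prod.ext (hp'.2.trans hq'.2.symm) hpq
    rw [← hcard2]
    apply hLHr
    · intro g hg
      rw [Finset.mem_image] at hg
      obtain ⟨p, hp, rfl⟩ := hg
      exact (hTmem p (hTeT hp)).2.1
    · intro f1 hf1 f2 hf2 hne
      rw [Finset.mem_image] at hf1 hf2
      obtain ⟨p, hp, rfl⟩ := hf1
      obtain ⟨q, hq, rfl⟩ := hf2
      have hpe : p.1 = e := (Finset.mem_filter.1 hp).2
      have hqe : q.1 = e := (Finset.mem_filter.1 hq).2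
      have hpT := hTeT hp
      have hqT := hTeT hq
      have hR : patternOfPair (cmb p) (cmb q) = P ∨ patternOfPair (cmb q) (cmb p) = P :=
        hreal p hpT q hqT (fun h => hne (by rw [h]))
      have hd : Disjoint p.2 q.2 := hHrdisj _ (hTmem p hpT).2.1 _ (hTmem q hqT).2.1 hne
      have hq1p1 : q.1 = p.1 := hqe.trans hpe.symm
      have hcep : p.1.card = p.2.card := by
        rw [hHcard _ (hTmem p hpT).1, hHrcard _ (hTmem p hpT).2.1]
      have hceq : p.1.card = q.2.card := by
        rw [hHcard _ (hTmem p hpT).1, hHrcard _ (hTmem q hqT).2.1]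
      have hcmbq : cmb q = combineEdge N p.1 q.2 := by rw [hcmb]; simp only; rw [hq1p1]
      have h1 : patternOfPair (cmb p) (cmb q) = patternOfPair p.2 q.2 := by
        rw [hcmbq]
        exact my_pattern_snd N (by omega) Hr hrp p.1 p.2 q.2 hcep hceq hd
          (hTmem p hpT).2.1 (hTmem q hqT).2.1
      have h2 : patternOfPair (cmb q) (cmb p) = patternOfPair q.2 p.2 := by
        rw [hcmbq]
        exact my_pattern_snd N (by omega) Hr hrp p.1 q.2 p.2 hceq hcep hd.symm
          (hTmem q hqT).2.1 (hTmem p hpT).2.1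
      rcases hR with h | h
      · left; rw [← h1]; exact h
      · right; rw [← h2]; exact h
  calc S.card = T.card := hcardS
    _ = ∑ e ∈ E, (T.filter (fun p => p.1 = e)).card := hfib
    _ ≤ ∑ _e ∈ E, mHr := Finset.sum_le_sum hfibbound
    _ = E.card * mHr := by rw [Finset.sum_const, smul_eq_mul]
    _ ≤ mH * mHr := Nat.mul_le_mul_right _ (hLH E hEH hEclique)
end

section
/- Let r ≥ 1 and for each of the 2^{r−1} collectable r-patterns P with all block sizes equal to 2 (i.e., P ∈ 𝒫((1,1,…,1))), let m_P be a positive integer. Then there exists an r-partite ordered r-uniform hypergraph matching H of size ∏_{P ∈ 𝒫((1,…,1))} m_P such that for every P ∈ 𝒫((1,…,1)) every P-clique in H has size at most m_P, and for every other r-pattern P every P-clique has size 1. -/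
/-- The collectable pattern with block sizes `2·lam 0, 2·lam 1, …` and block orientations
given by `τ` (`true` = `A^k B^k`, `false` = `B^k A^k`). -/
def patternOfParts (lam : List ℕ) (τ : Fin lam.length → Bool) : List Bool :=
  (List.ofFn (fun i => pblock (lam.get i) (τ i))).flatten

/-- `𝒫(lam)`: the set of collectable patterns whose block partition has block sizes
`2·lam 0, 2·lam 1, …` in order (the first block must start with A). -/
def patternFinset (lam : List ℕ) : Finset (List Bool) :=
  (Finset.univ.filter (fun τ : Fin lam.length → Bool =>
      ∀ h : 0 < lam.length, τ ⟨0, h⟩ = true)).image (patternOfParts lam)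

/-- An ordered partition of `r`: a list of positive integers summing to `r`. -/
def IsOrderedPartition (r : ℕ) (lam : List ℕ) : Prop :=
  lam.sum = r ∧ ∀ k ∈ lam, 0 < k

/-- A pattern is collectable if it admits a block partition. -/
def Collectable (r : ℕ) (P : List Bool) : Prop :=
  ∃ lam : List ℕ, IsOrderedPartition r lam ∧ P ∈ patternFinset lam

section Helpers

/-- Base-`M` value of a digit string. -/
def nval (M : ℕ) : ∀ {t : ℕ}, (Fin t → ℕ) → ℕ
  | 0, _ => 0
  | (t+1), d => d 0 * M ^ t + nval M (fun j => d j.succ)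

lemma nval_lt (M : ℕ) {t : ℕ} (d : Fin t → ℕ) (hd : ∀ j, d j < M) : nval M d < M ^ t := by
  induction t with
  | zero => simp [nval]
  | succ t ih =>
    have h1 := ih (fun j => d j.succ) (fun j => hd _)
    have h2 : d 0 + 1 ≤ M := hd 0
    have h3 : (d 0 + 1) * M ^ t ≤ M * M ^ t := Nat.mul_le_mul_right _ h2
    simp only [nval]
    calc d 0 * M ^ t + nval M (fun j => d j.succ) < (d 0 + 1) * M ^ t := by nlinarith
    _ ≤ M * M ^ t := h3
    _ = M ^ (t+1) := by ring

lemma nval_lt_nval (M : ℕ) : ∀ {t : ℕ} (d e : Fin t → ℕ), (∀ j, d j < M) →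
    ∀ (j₀ : Fin t), d j₀ < e j₀ → (∀ j, j < j₀ → d j = e j) →
    nval M d < nval M e := by
  intro t
  induction t with
  | zero => exact fun _ _ _ j => j.elim0
  | succ t ih =>
    intro d e hd j₀ hlt hagree
    rcases Fin.eq_zero_or_eq_succ j₀ with h0 | ⟨k, rfl⟩
    · subst h0
      have h1 : nval M (fun j : Fin t => d j.succ) < M ^ t := nval_lt M _ (fun j => hd _)
      simp only [nval]
      calc d 0 * M ^ t + nval M (fun j => d j.succ) < (d 0 + 1) * M ^ t := by nlinarith
      _ ≤ e 0 * M ^ t := Nat.mul_le_mul_right _ hlt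
      _ ≤ e 0 * M ^ t + nval M (fun j => e j.succ) := Nat.le_add_right _ _
    · have h0 : d 0 = e 0 := hagree 0 (Fin.succ_pos k)
      have := ih (fun j => d j.succ) (fun j => e j.succ) (fun j => hd _) k hlt
        (fun j hj => hagree j.succ (by simpa using hj))
      simp only [nval, h0]
      omega

lemma nval_lt_iff (M : ℕ) {t : ℕ} (d e : Fin t → ℕ) (hd : ∀ j, d j < M) (he : ∀ j, e j < M)
    (j₀ : Fin t) (hne : d j₀ ≠ e j₀) (hagree : ∀ j, j < j₀ → d j = e j) :
    (nval M d < nval M e ↔ d j₀ < e j₀) := by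
  rcases lt_or_gt_of_ne hne with h | h
  · simp only [h, iff_true]
    exact nval_lt_nval M d e hd j₀ h hagree
  · have := nval_lt_nval M e d he j₀ h (fun j hj => (hagree j hj).symm)
    omega

lemma nval_ne (M : ℕ) {t : ℕ} (d e : Fin t → ℕ) (hd : ∀ j, d j < M) (he : ∀ j, e j < M)
    (j₀ : Fin t) (hne : d j₀ ≠ e j₀) (hagree : ∀ j, j < j₀ → d j = e j) :
    nval M d ≠ nval M e := by
  rcases lt_or_gt_of_ne hne with h | h
  · exact Nat.ne_of_lt (nval_lt_nval M d e hd j₀ h hagree)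
  · exact Nat.ne_of_gt (nval_lt_nval M e d he j₀ h (fun j hj => (hagree j hj).symm))

lemma pblock_one (b : Bool) : pblock 1 b = [b, !b] := by cases b <;> simp [pblock]

/-- join of sign blocks -/
def jb {r : ℕ} (σ : Fin r → Bool) : List Bool := (List.ofFn (fun i => [σ i, !σ i])).flatten

def pp (r : ℕ) (σ : Fin r → Bool) : List Bool :=
  patternOfParts (List.replicate r 1)
    (fun i => σ (Fin.cast List.length_replicate i))

lemma pp_eq_jb (r : ℕ) (σ : Fin r → Bool) : pp r σ = jb σ := by
  unfold pp patternOfParts jb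
  congr 1
  have h : (List.replicate r 1).length = r := List.length_replicate
  rw [List.ofFn_congr h]
  simp [List.getElem_replicate, pblock_one, Fin.cast_cast]

lemma jb_inj : ∀ {r : ℕ} (f g : Fin r → Bool), jb f = jb g → f = g := by
  intro r
  induction r with
  | zero => intro f g _; funext i; exact i.elim0
  | succ n ih =>
    intro f g h
    unfold jb at h
    rw [List.ofFn_succ, List.ofFn_succ] at h
    simp only [List.flatten_cons, List.cons_append, List.nil_append, List.cons.injEq] at h
    obtain ⟨h0, -, htail⟩ := h
    have := ih _ _ htail
    funext i
    refine Fin.cases h0 (fun k => ?_) i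
    exact congrFun this k

lemma jb_head {r : ℕ} (f : Fin (r+1) → Bool) : (jb f).head? = some (f 0) := by
  unfold jb
  rw [List.ofFn_succ]
  simp

lemma mem_patternFinset_iff (r : ℕ) (P : List Bool) :
    P ∈ patternFinset (List.replicate r 1) ↔
      ∃ σ : Fin r → Bool, (∀ h : 0 < r, σ ⟨0, h⟩ = true) ∧ pp r σ = P := by
  unfold patternFinset
  simp only [Finset.mem_image, Finset.mem_filter, Finset.mem_univ, true_and]
  have h : (List.replicate r 1).length = r := List.length_replicate
  constructor
  · rintro ⟨τ, hτ, rfl⟩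
    refine ⟨fun i => τ (Fin.cast h.symm i), fun h0 => hτ (by omega), ?_⟩
    unfold pp
    congr
  · rintro ⟨σ, hσ, rfl⟩
    exact ⟨fun i => σ (Fin.cast h i), fun h0 => hσ (by omega), rfl⟩

lemma sorted_join_blocks : ∀ {n : ℕ} (g : Fin n → List ℤ),
    (∀ i, (g i).Pairwise (· < ·)) →
    (∀ i j, i < j → ∀ a ∈ g i, ∀ b ∈ g j, a < b) →
    ((List.ofFn g).flatten).Pairwise (· < ·) := by
  intro n
  induction n with
  | zero => simp
  | succ n ih =>
    intro g h1 h2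
    rw [List.ofFn_succ]
    simp only [List.flatten_cons, List.pairwise_append]
    refine ⟨h1 0, ih _ (fun i => h1 i.succ)
      (fun i j hij => h2 i.succ j.succ (by simpa using hij)), ?_⟩
    intro a ha b hb
    rw [List.mem_flatten] at hb
    obtain ⟨l, hl, hbl⟩ := hb
    rw [List.mem_ofFn] at hl
    obtain ⟨i, rfl⟩ := hl
    exact h2 0 i.succ (Fin.succ_pos i) a ha b hbl

lemma sort_eq_of_sorted (s : Finset ℤ) (l : List ℤ) (hs : l.Pairwise (· < ·))
    (h : ∀ a, a ∈ l ↔ a ∈ s) : s.sort (· ≤ ·) = l := by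
  have hnd : l.Nodup := hs.nodup
  have hperm : (s.sort (· ≤ ·)).Perm l := by
    apply List.perm_of_nodup_nodup_toFinset_eq (Finset.sort_nodup _ _) hnd
    ext a
    simp [Finset.mem_sort, h]
  exact List.Perm.eq_of_pairwise' (Finset.pairwise_sort ..) (hs.imp le_of_lt) hperm

def spair (a b : ℤ) : List ℤ := if a < b then [a, b] else [b, a]

lemma mem_spair (a b x : ℤ) : x ∈ spair a b ↔ x = a ∨ x = b := by
  unfold spair; split <;> simp <;> tauto

lemma sorted_spair (a b : ℤ) (h : a ≠ b) : (spair a b).Pairwise (· < ·) := by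
  unfold spair; split <;> simp <;> omega

lemma exists_minDiff {n : ℕ} (x y : Fin n → ℕ) (h : x ≠ y) :
    ∃ j₁ : Fin n, x j₁ ≠ y j₁ ∧ ∀ j, j < j₁ → x j = y j := by
  have hne : (Finset.univ.filter (fun j => x j ≠ y j)).Nonempty := by
    rw [Finset.filter_nonempty_iff]
    simpa [funext_iff] using h
  set s := Finset.univ.filter (fun j => x j ≠ y j) with hs
  refine ⟨s.min' hne, ?_, ?_⟩
  · exact (Finset.mem_filter.1 (s.min'_mem hne)).2
  · intro j hj
    by_contra hc
    have : s.min' hne ≤ j := s.min'_le j (Finset.mem_filter.2 ⟨Finset.mem_univ _, hc⟩)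
    exact absurd hj (not_lt.2 this)

end Helpers

section Constr

variable (r : ℕ) (m : List Bool → ℕ)

def Ps : Finset (List Bool) := patternFinset (List.replicate r 1)
noncomputable def LL : List (List Bool) := (Ps r).toList
noncomputable def tt : ℕ := (LL r).length
def MM : ℕ := (Ps r).sup m + 1

lemma LL_get_mem (j : Fin (tt r)) : (LL r).get j ∈ Ps r := by
  rw [← Finset.mem_toList]; exact List.get_mem _ j

noncomputable def sig (j : Fin (tt r)) : Fin r → Bool :=
  Classical.choose ((mem_patternFinset_iff r _).1 (LL_get_mem r j))

lemma sig_zero (j : Fin (tt r)) (h : 0 < r) : sig r j ⟨0, h⟩ = true :=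
  (Classical.choose_spec ((mem_patternFinset_iff r _).1 (LL_get_mem r j))).1 h

lemma pp_sig (j : Fin (tt r)) : pp r (sig r j) = (LL r).get j :=
  (Classical.choose_spec ((mem_patternFinset_iff r _).1 (LL_get_mem r j))).2

noncomputable def mj (j : Fin (tt r)) : ℕ := m ((LL r).get j)

lemma mj_lt_MM (j : Fin (tt r)) : mj r m j < MM r m :=
  Nat.lt_succ_of_le (Finset.le_sup (LL_get_mem r j))

noncomputable def XX : Finset (Fin (tt r) → ℕ) := Fintype.piFinset (fun j => Finset.range (mj r m j))

lemma mem_XX {x : Fin (tt r) → ℕ} : x ∈ XX r m ↔ ∀ j, x j < mj r m j := by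
  simp [XX, Fintype.mem_piFinset]

noncomputable def DD (i : Fin r) (x : Fin (tt r) → ℕ) (j : Fin (tt r)) : ℕ :=
  if sig r j i then x j else mj r m j - 1 - x j

noncomputable def valp (i : Fin r) (x : Fin (tt r) → ℕ) : ℕ := nval (MM r m) (DD r m i x)

noncomputable def BB : ℕ := (MM r m) ^ (tt r)

noncomputable def vert (i : Fin r) (x : Fin (tt r) → ℕ) : ℕ := i * BB r m + valp r m i x

noncomputable def edge (x : Fin (tt r) → ℕ) : Finset ℤ :=
  Finset.image (fun i : Fin r => ((vert r m i x : ℕ) : ℤ)) Finset.univ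

variable {r m}

lemma DD_lt {x : Fin (tt r) → ℕ} (hx : x ∈ XX r m) (i : Fin r) (j : Fin (tt r)) :
    DD r m i x j < MM r m := by
  have h1 := ((mem_XX r m).1 hx) j
  have h2 := mj_lt_MM r m j
  unfold DD; split <;> omega

lemma DD_eq {x y : Fin (tt r) → ℕ} (i : Fin r) {j : Fin (tt r)} (h : x j = y j) :
    DD r m i x j = DD r m i y j := by
  unfold DD; rw [h]

lemma DD_lt_iff {x y : Fin (tt r) → ℕ} (hx : x ∈ XX r m) (hy : y ∈ XX r m)
    (i : Fin r) {j : Fin (tt r)} (h : x j < y j) :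
    (DD r m i x j < DD r m i y j ↔ sig r j i = true) := by
  have h1 := ((mem_XX r m).1 hx) j
  have h2 := ((mem_XX r m).1 hy) j
  unfold DD
  rcases hs : sig r j i with _|_ <;> simp <;> omega

lemma valp_lt_iff {x y : Fin (tt r) → ℕ} (hx : x ∈ XX r m) (hy : y ∈ XX r m)
    (i : Fin r) (j₁ : Fin (tt r)) (hne : x j₁ ≠ y j₁) (hagree : ∀ j, j < j₁ → x j = y j)
    (hlt : x j₁ < y j₁) :
    (valp r m i x < valp r m i y ↔ sig r j₁ i = true) := by
  have hDne : DD r m i x j₁ ≠ DD r m i y j₁ := by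
    have h1 := ((mem_XX r m).1 hx) j₁
    have h2 := ((mem_XX r m).1 hy) j₁
    unfold DD; split <;> omega
  rw [valp, valp, nval_lt_iff (MM r m) _ _ (DD_lt hx i) (DD_lt hy i) j₁ hDne
    (fun j hj => DD_eq i (hagree j hj))]
  exact DD_lt_iff hx hy i hlt

lemma valp_ne {x y : Fin (tt r) → ℕ} (hx : x ∈ XX r m) (hy : y ∈ XX r m)
    (hne : x ≠ y) (i : Fin r) : valp r m i x ≠ valp r m i y := by
  obtain ⟨j₁, hj₁, hagree⟩ := exists_minDiff x y hne
  have hDne : DD r m i x j₁ ≠ DD r m i y j₁ := by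
    have h1 := ((mem_XX r m).1 hx) j₁
    have h2 := ((mem_XX r m).1 hy) j₁
    unfold DD; split <;> omega
  exact nval_ne (MM r m) _ _ (DD_lt hx i) (DD_lt hy i) j₁ hDne
    (fun j hj => DD_eq i (hagree j hj))

lemma valp_lt_BB {x : Fin (tt r) → ℕ} (hx : x ∈ XX r m) (i : Fin r) :
    valp r m i x < BB r m := nval_lt _ _ (DD_lt hx i)

lemma vert_lt {x : Fin (tt r) → ℕ} (hx : x ∈ XX r m) {i i' : Fin r} (h : i < i')
    (y' : Fin (tt r) → ℕ) : vert r m i x < vert r m i' y' := by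
  have h1 := valp_lt_BB hx i
  have h2 : (i : ℕ) + 1 ≤ (i' : ℕ) := h
  unfold vert
  calc (i : ℕ) * BB r m + valp r m i x < ((i : ℕ) + 1) * BB r m := by nlinarith
  _ ≤ (i' : ℕ) * BB r m := Nat.mul_le_mul_right _ h2
  _ ≤ _ := Nat.le_add_right _ _

lemma vert_inj_i {x y : Fin (tt r) → ℕ} (hx : x ∈ XX r m) (hy : y ∈ XX r m)
    {i i' : Fin r} (h : vert r m i x = vert r m i' y) : i = i' := by
  by_contra hne
  rcases lt_or_gt_of_ne hne with hlt | hlt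
  · exact absurd h (Nat.ne_of_lt (vert_lt hx hlt y))
  · exact absurd h.symm (Nat.ne_of_lt (vert_lt hy hlt x))

end Constr

section Constr2

variable {r : ℕ} {m : List Bool → ℕ}

lemma mem_edge {x : Fin (tt r) → ℕ} {v : ℤ} :
    v ∈ edge r m x ↔ ∃ i : Fin r, ((vert r m i x : ℕ) : ℤ) = v := by
  simp [edge]

lemma vert_mem_edge {x : Fin (tt r) → ℕ} (i : Fin r) :
    ((vert r m i x : ℕ) : ℤ) ∈ edge r m x := mem_edge.2 ⟨i, rfl⟩

lemma vert_not_mem_edge {x y : Fin (tt r) → ℕ} (hx : x ∈ XX r m) (hy : y ∈ XX r m)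
    (hne : x ≠ y) (i : Fin r) : ((vert r m i y : ℕ) : ℤ) ∉ edge r m x := by
  intro hmem
  obtain ⟨i', hi'⟩ := mem_edge.1 hmem
  have h : vert r m i' x = vert r m i y := by exact_mod_cast hi'
  have : i' = i := vert_inj_i hx hy h
  subst this
  exact valp_ne hx hy hne i' (by unfold vert at h; omega)

lemma edge_card {x : Fin (tt r) → ℕ} (hx : x ∈ XX r m) : (edge r m x).card = r := by
  rw [edge, Finset.card_image_of_injective _ ?_, Finset.card_univ, Fintype.card_fin]
  intro i i' h
  dsimp only at h
  exact vert_inj_i hx hx (by exact_mod_cast h)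

lemma edge_inj {x y : Fin (tt r) → ℕ} (hr : 0 < r) (hx : x ∈ XX r m) (hy : y ∈ XX r m)
    (h : edge r m x = edge r m y) : x = y := by
  by_contra hne
  exact vert_not_mem_edge hy hx (Ne.symm hne) ⟨0, hr⟩ (h ▸ vert_mem_edge ⟨0, hr⟩)

lemma edge_disjoint {x y : Fin (tt r) → ℕ} (hx : x ∈ XX r m) (hy : y ∈ XX r m)
    (hne : x ≠ y) : Disjoint (edge r m x) (edge r m y) := by
  rw [Finset.disjoint_left]
  intro v hvx hvy
  obtain ⟨i, rfl⟩ := mem_edge.1 hvx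
  exact vert_not_mem_edge hy hx (Ne.symm hne) i hvy

lemma edge_sort {x : Fin (tt r) → ℕ} (hx : x ∈ XX r m) :
    (edge r m x).sort (· ≤ ·) = List.ofFn (fun i : Fin r => ((vert r m i x : ℕ) : ℤ)) := by
  apply sort_eq_of_sorted
  · rw [List.pairwise_ofFn]
    intro i j hij
    exact_mod_cast vert_lt hx hij x
  · intro a
    rw [List.mem_ofFn, mem_edge]

lemma pattern_edge {x y : Fin (tt r) → ℕ} (hx : x ∈ XX r m) (hy : y ∈ XX r m) (hne : x ≠ y) :
    patternOfPair (edge r m x) (edge r m y)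
      = pp r (fun i => decide (valp r m i x < valp r m i y)) := by
  have hvne : ∀ i, valp r m i x ≠ valp r m i y := valp_ne hx hy hne
  have hvertne : ∀ i : Fin r, ((vert r m i x : ℕ) : ℤ) ≠ ((vert r m i y : ℕ) : ℤ) := by
    intro i h
    have : vert r m i x = vert r m i y := by exact_mod_cast h
    exact hvne i (by unfold vert at this; omega)
  have hsort : (edge r m x ∪ edge r m y).sort (· ≤ ·)
      = (List.ofFn (fun i : Fin r =>
          spair ((vert r m i x : ℕ) : ℤ) ((vert r m i y : ℕ) : ℤ))).flatten := by
    apply sort_eq_of_sorted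
    · apply sorted_join_blocks
      · intro i
        exact sorted_spair _ _ (hvertne i)
      · intro i j hij a ha b hb
        rw [mem_spair] at ha hb
        have hax : ∀ z ∈ XX r m, a = ((vert r m i z : ℕ) : ℤ) → ∀ w, b = ((vert r m j w : ℕ) : ℤ) → a < b := by
          intro z hz haz w hbw
          subst haz; subst hbw
          exact_mod_cast vert_lt hz hij w
        rcases ha with ha | ha <;> rcases hb with hb | hb
        · exact hax x hx ha _ hb
        · exact hax x hx ha _ hb
        · exact hax y hy ha _ hb
        · exact hax y hy ha _ hb
    · intro a
      rw [List.mem_flatten]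
      constructor
      · rintro ⟨l, hl, hal⟩
        rw [List.mem_ofFn] at hl
        obtain ⟨i, rfl⟩ := hl
        rw [mem_spair] at hal
        rcases hal with rfl | rfl
        · exact Finset.mem_union_left _ (vert_mem_edge i)
        · exact Finset.mem_union_right _ (vert_mem_edge i)
      · intro ha
        rcases Finset.mem_union.1 ha with ha | ha
        · obtain ⟨i, rfl⟩ := mem_edge.1 ha
          exact ⟨_, List.mem_ofFn |>.2 ⟨i, rfl⟩, (mem_spair _ _ _).2 (Or.inl rfl)⟩
        · obtain ⟨i, rfl⟩ := mem_edge.1 ha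
          exact ⟨_, List.mem_ofFn |>.2 ⟨i, rfl⟩, (mem_spair _ _ _).2 (Or.inr rfl)⟩
  unfold patternOfPair
  rw [hsort, pp_eq_jb]
  unfold jb
  rw [List.map_flatten, List.map_ofFn]
  apply congrArg List.flatten
  apply congrArg List.ofFn
  funext i
  simp only [Function.comp_apply]
  by_cases hvi : valp r m i x < valp r m i y
  · have hvlt : ((vert r m i x : ℕ) : ℤ) < ((vert r m i y : ℕ) : ℤ) := by
      have : vert r m i x < vert r m i y := by unfold vert; omega
      exact_mod_cast this
    rw [spair, if_pos hvlt]
    simp [vert_mem_edge, vert_not_mem_edge hx hy hne, hvi]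
  · have hvi' : valp r m i y < valp r m i x := by have := hvne i; omega
    have hvlt : ((vert r m i y : ℕ) : ℤ) < ((vert r m i x : ℕ) : ℤ) := by
      have : vert r m i y < vert r m i x := by unfold vert; omega
      exact_mod_cast this
    rw [spair, if_neg (by omega)]
    simp [vert_mem_edge, vert_not_mem_edge hx hy hne, hvi]

end Constr2

section Constr3

variable {r : ℕ} {m : List Bool → ℕ}

lemma patternOfPair_edge {x y : Fin (tt r) → ℕ} (hx : x ∈ XX r m) (hy : y ∈ XX r m)
    (j₁ : Fin (tt r)) (hj : x j₁ ≠ y j₁) (hag : ∀ j, j < j₁ → x j = y j)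
    (hlt : x j₁ < y j₁) :
    patternOfPair (edge r m x) (edge r m y) = (LL r).get j₁ := by
  have hne : x ≠ y := fun h => hj (congrFun h j₁)
  rw [pattern_edge hx hy hne, ← pp_sig r j₁]
  congr 1
  funext i
  have hiff := valp_lt_iff hx hy i j₁ hj hag hlt
  cases hsig : sig r j₁ i
  · rw [hsig] at hiff
    simp only [Bool.false_eq_true, iff_false] at hiff
    simp [hiff]
  · rw [hsig] at hiff
    simp [hiff.2 rfl]

lemma patternOfPair_edge_rev_head (h0 : 0 < r) {x y : Fin (tt r) → ℕ}
    (hx : x ∈ XX r m) (hy : y ∈ XX r m)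
    (j₁ : Fin (tt r)) (hj : x j₁ ≠ y j₁) (hag : ∀ j, j < j₁ → x j = y j)
    (hlt : x j₁ < y j₁) :
    (patternOfPair (edge r m y) (edge r m x)).head? = some false := by
  have hne : y ≠ x := fun h => hj (congrFun h j₁).symm
  rw [pattern_edge hy hx hne, pp_eq_jb]
  have h2 : valp r m ⟨0, h0⟩ x < valp r m ⟨0, h0⟩ y :=
    (valp_lt_iff hx hy ⟨0, h0⟩ j₁ hj hag hlt).2 (sig_zero r j₁ h0)
  obtain ⟨r', rfl⟩ : ∃ r', r = r' + 1 := ⟨r - 1, by omega⟩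
  rw [jb_head]
  have h3 : (0 : Fin (r' + 1)) = ⟨0, h0⟩ := rfl
  rw [h3]
  simp only [decide_eq_false_iff_not, not_lt, Option.some_inj]
  omega

lemma head_of_mem_Ps (h0 : 0 < r) {P : List Bool}
    (hP : P ∈ patternFinset (List.replicate r 1)) : P.head? = some true := by
  obtain ⟨σ, hσ, rfl⟩ := (mem_patternFinset_iff r P).1 hP
  rw [pp_eq_jb]
  obtain ⟨r', rfl⟩ : ∃ r', r = r' + 1 := ⟨r - 1, by omega⟩
  rw [jb_head]
  exact congrArg some (hσ h0)

lemma realizes_eq_get (h0 : 0 < r) {x y : Fin (tt r) → ℕ} (hx : x ∈ XX r m)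
    (hy : y ∈ XX r m) (hne : x ≠ y) {P : List Bool} (hhead : P.head? = some true)
    (hreal : Realizes P (edge r m x) (edge r m y)) :
    ∃ j₁ : Fin (tt r), P = (LL r).get j₁ ∧ x j₁ ≠ y j₁ ∧ ∀ j, j < j₁ → x j = y j := by
  obtain ⟨j₁, hj₁, hag⟩ := exists_minDiff x y hne
  refine ⟨j₁, ?_, hj₁, hag⟩
  rcases lt_or_gt_of_ne hj₁ with hlt | hlt
  · rcases hreal with h | h
    · rw [← h, patternOfPair_edge hx hy j₁ hj₁ hag hlt]
    · exfalso
      have := patternOfPair_edge_rev_head h0 hx hy j₁ hj₁ hag hlt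
      rw [h, hhead] at this
      simp at this
  · have hj₁' : y j₁ ≠ x j₁ := hj₁.symm
    have hag' : ∀ j, j < j₁ → y j = x j := fun j hj => (hag j hj).symm
    rcases hreal with h | h
    · exfalso
      have := patternOfPair_edge_rev_head h0 hy hx j₁ hj₁' hag' hlt
      rw [h, hhead] at this
      simp at this
    · rw [← h, patternOfPair_edge hy hx j₁ hj₁' hag' hlt]

end Constr3


/-- **Construction of an `r`-partite matching.** For positive integers `m P` for the `2^(r-1)`
collectable `r`-patterns `P ∈ 𝒫((1,…,1))`, there is an `r`-partite ordered matching of size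
`∏_{P ∈ 𝒫((1,…,1))} m P` in which every `P`-clique has size at most `m P` for
`P ∈ 𝒫((1,…,1))`, and size at most `1` for every other `r`-pattern. -/
theorem r_partite_construction (r : ℕ) (hr : 1 ≤ r)
    (m : List Bool → ℕ) (hm : ∀ P ∈ patternFinset (List.replicate r 1), 0 < m P) :
    ∃ H : Finset (Finset ℤ),
      (∀ e ∈ H, e.card = r) ∧
      (∀ e ∈ H, ∀ f ∈ H, e ≠ f → Disjoint e f) ∧
      RPartite H ∧
      H.card = (∏ P ∈ patternFinset (List.replicate r 1), m P) ∧
      (∀ P ∈ patternFinset (List.replicate r 1), ∀ S ⊆ H, IsPClique P S → S.card ≤ m P) ∧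
      (∀ P : List Bool, IsPattern r P → P ∉ patternFinset (List.replicate r 1) →
        ∀ S ⊆ H, IsPClique P S → S.card ≤ 1) := by
  have h0 : 0 < r := hr
  refine ⟨(XX r m).image (edge r m), ?_, ?_, ?_, ?_, ?_, ?_⟩
  · rintro e he
    obtain ⟨x, hx, rfl⟩ := Finset.mem_image.1 he
    exact edge_card hx
  · rintro e he f hf hne
    obtain ⟨x, hx, rfl⟩ := Finset.mem_image.1 he
    obtain ⟨y, hy, rfl⟩ := Finset.mem_image.1 hf
    exact edge_disjoint hx hy (fun h => hne (congrArg _ h))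
  · rintro e he f hf i hie hif
    obtain ⟨x, hx, rfl⟩ := Finset.mem_image.1 he
    obtain ⟨y, hy, rfl⟩ := Finset.mem_image.1 hf
    have hxl : ((edge r m x).sort (· ≤ ·)).length = r := by rw [edge_sort hx]; simp
    have hyl : ((edge r m y).sort (· ≤ ·)).length = r := by rw [edge_sort hy]; simp
    have hir : i < r := hxl ▸ hie
    have hir' : i + 1 < r := hyl ▸ hif
    have e1 : ((edge r m x).sort (· ≤ ·)).get ⟨i, hie⟩
        = ((vert r m ⟨i, hir⟩ x : ℕ) : ℤ) := by
      rw [List.get_of_eq (edge_sort hx), List.get_ofFn]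
      rfl
    have e2 : ((edge r m y).sort (· ≤ ·)).get ⟨i + 1, hif⟩
        = ((vert r m ⟨i + 1, hir'⟩ y : ℕ) : ℤ) := by
      rw [List.get_of_eq (edge_sort hy), List.get_ofFn]
      rfl
    rw [e1, e2]
    have hlt : (⟨i, hir⟩ : Fin r) < ⟨i + 1, hir'⟩ := by simp [Fin.lt_def]
    exact_mod_cast vert_lt hx hlt y
  · rw [Finset.card_image_of_injOn (fun x hx y hy h => edge_inj h0 hx hy h)]
    rw [XX, Fintype.card_piFinset]
    simp only [Finset.card_range]
    have h1 : ∏ j : Fin (tt r), mj r m j = ((LL r).map m).prod := by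
      rw [← List.prod_ofFn]
      congr 1
      conv_rhs => rw [← List.ofFn_get (LL r), List.map_ofFn]
      rfl
    rw [h1, Finset.prod, ← Multiset.prod_coe, ← Multiset.map_coe]
    rw [show ((LL r : List (List Bool)) : Multiset (List Bool)) = (Ps r).val from
      Finset.coe_toList _]
    rfl
  · intro P hP S hS hclique
    obtain ⟨j₀, hj₀⟩ : ∃ j₀ : Fin (tt r), (LL r).get j₀ = P := by
      have : P ∈ LL r := Finset.mem_toList.2 hP
      obtain ⟨n, hn⟩ := List.mem_iff_get.1 this
      exact ⟨n, hn⟩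
    classical
    set T := (XX r m).filter (fun x => edge r m x ∈ S) with hT
    have hST : S = T.image (edge r m) := by
      ext e
      simp only [hT, Finset.mem_image, Finset.mem_filter]
      constructor
      · intro he
        obtain ⟨x, hx, rfl⟩ := Finset.mem_image.1 (hS he)
        exact ⟨x, ⟨hx, he⟩, rfl⟩
      · rintro ⟨x, ⟨hx, hxS⟩, rfl⟩
        exact hxS
    have hTX : T ⊆ XX r m := Finset.filter_subset _ _
    rw [hST, Finset.card_image_of_injOn
      (fun x hx y hy h => edge_inj h0 (hTX hx) (hTX hy) h)]
    have := Finset.card_le_card_of_injOn (fun x => x j₀)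
      (fun x hx => Finset.mem_range.2 (by
        have : x ∈ XX r m := hTX hx
        have h2 := (mem_XX r m).1 this j₀
        rw [mj] at h2
        rwa [hj₀] at h2)) (s := T) (t := Finset.range (m P)) ?_
    · simpa using this
    · intro x hxT y hyT hxy
      by_contra hne
      have hx := hTX (Finset.mem_coe.1 hxT)
      have hy := hTX (Finset.mem_coe.1 hyT)
      have hxS : edge r m x ∈ S := (Finset.mem_filter.1 (Finset.mem_coe.1 hxT)).2
      have hyS : edge r m y ∈ S := (Finset.mem_filter.1 (Finset.mem_coe.1 hyT)).2
      have hedne : edge r m x ≠ edge r m y := fun h => hne (edge_inj h0 hx hy h)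
      have hreal := hclique _ hxS _ hyS hedne
      obtain ⟨j₁, hPj₁, hj₁ne, -⟩ :=
        realizes_eq_get h0 hx hy hne (head_of_mem_Ps h0 hP) hreal
      have : j₀ = j₁ := by
        rw [← hj₀] at hPj₁
        exact ((Finset.nodup_toList (Ps r)).get_inj_iff).1 hPj₁
      exact hj₁ne (this ▸ hxy)
  · intro P hpat hnotin S hS hclique
    by_contra hc
    have h2 : 1 < S.card := by omega
    obtain ⟨e, he, f, hf, hef⟩ := Finset.one_lt_card.1 h2
    obtain ⟨x, hx, rfl⟩ := Finset.mem_image.1 (hS he)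
    obtain ⟨y, hy, rfl⟩ := Finset.mem_image.1 (hS hf)
    have hne : x ≠ y := fun h => hef (congrArg _ h)
    have hreal := hclique _ he _ hf hef
    obtain ⟨j₁, hPj₁, -, -⟩ := realizes_eq_get h0 hx hy hne hpat.2.2 hreal
    exact hnotin (hPj₁ ▸ LL_get_mem r j₁)
end
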